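/- (Observational–interventional gap equals reverse directed information) Let (X^n, Y^n) be jointly distributed random sequences with finite alphabets. Then E[log ( P(Y^n | X^n) / P(Y^n‖X^n) )] = I(Y^{n-1}→X^n), where the expectation is over the joint pmf and I(Y^{n-1}→X^n) := Σ_{i=1}^n I(Y^{i-1}; X_i | X^{i-1}). Equivalently, the conditional KL divergence of the observational conditional law P_{Y^n|X^n} from the causally conditioned (interventional) law P_{Y^n‖X^n}, averaged over P_{X^n}, equals I(Y^{n-1}→X^n). -/

import Mathlib

open Finset

noncomputable section

-- Probability of the event `E` under the pmf `p` on a finite sample space `Ω`.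
open Classical in
def pr {Ω : Type*} [Fintype Ω] (p : Ω → ℝ) (E : Ω → Prop) : ℝ :=
  ∑ ω, if E ω then p ω else 0

-- Shannon entropy `H(U)` (pointwise form).
def entropy {Ω α : Type*} [Fintype Ω] (p : Ω → ℝ) (U : Ω → α) : ℝ :=
  -∑ ω, p ω * Real.log (pr p (fun ω' => U ω' = U ω))

-- Conditional Shannon entropy `H(U | V)`.
def condEntropy {Ω α β : Type*} [Fintype Ω] (p : Ω → ℝ) (U : Ω → α) (V : Ω → β) : ℝ :=
  -∑ ω, p ω * Real.log
      (pr p (fun ω' => U ω' = U ω ∧ V ω' = V ω) / pr p (fun ω' => V ω' = V ω))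

-- Mutual information `I(U ; V)`.
def mutualInfo {Ω α β : Type*} [Fintype Ω] (p : Ω → ℝ) (U : Ω → α) (V : Ω → β) : ℝ :=
  ∑ ω, p ω * Real.log
      (pr p (fun ω' => U ω' = U ω ∧ V ω' = V ω) /
        (pr p (fun ω' => U ω' = U ω) * pr p (fun ω' => V ω' = V ω)))

-- Conditional mutual information `I(U ; V | W)`.
def condMutualInfo {Ω α β γ : Type*} [Fintype Ω] (p : Ω → ℝ)
    (U : Ω → α) (V : Ω → β) (W : Ω → γ) : ℝ :=
  ∑ ω, p ω * Real.log
      ((pr p (fun ω' => U ω' = U ω ∧ V ω' = V ω ∧ W ω' = W ω) *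
          pr p (fun ω' => W ω' = W ω)) /
        (pr p (fun ω' => U ω' = U ω ∧ W ω' = W ω) *
          pr p (fun ω' => V ω' = V ω ∧ W ω' = W ω)))

-- The prefix `(X_0, …, X_{i-1})` of a random sequence `X`.
def prefixSeq {Ω 𝒳 : Type*} (X : Ω → ℕ → 𝒳) (i : ℕ) : Ω → (Fin i → 𝒳) :=
  fun ω j => X ω (j : ℕ)

-- Directed information `I(X^n → Y^n) = ∑_{i=1}^n I(X^i ; Y_i | Y^{i-1})` (0-indexed).
def directedInfo {Ω 𝒳 𝒴 : Type*} [Fintype Ω] (p : Ω → ℝ)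
    (X : Ω → ℕ → 𝒳) (Y : Ω → ℕ → 𝒴) (n : ℕ) : ℝ :=
  ∑ i ∈ Finset.range n,
    condMutualInfo p (prefixSeq X (i + 1)) (fun ω => Y ω i) (prefixSeq Y i)

open Classical in
lemma pr_nonneg' {Ω : Type*} [Fintype Ω] (p : Ω → ℝ) (hp0 : ∀ ω, 0 ≤ p ω) (E : Ω → Prop) :
    0 ≤ pr p E := by
  unfold pr
  exact Finset.sum_nonneg fun ω _ => by by_cases h : E ω <;> simp [h, hp0 ω]

open Classical in
lemma pr_pos' {Ω : Type*} [Fintype Ω] (p : Ω → ℝ) (hp0 : ∀ ω, 0 ≤ p ω) {E : Ω → Prop}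
    {ω : Ω} (hω : 0 < p ω) (hE : E ω) : 0 < pr p E := by
  unfold pr
  have h1 : (if E ω then p ω else 0) ≤ ∑ ω', if E ω' then p ω' else 0 :=
    Finset.single_le_sum (f := fun ω' => if E ω' then p ω' else 0)
      (fun ω' _ => by by_cases h : E ω' <;> simp [h, hp0 ω']) (Finset.mem_univ ω)
  rw [if_pos hE] at h1
  linarith

open Classical in
lemma pr_congr' {Ω : Type*} [Fintype Ω] (p : Ω → ℝ) {E E' : Ω → Prop}
    (h : ∀ ω, E ω ↔ E' ω) : pr p E = pr p E' := by
  unfold pr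
  exact Finset.sum_congr rfl fun ω _ => by simp [h ω]

open Classical in
lemma pr_true' {Ω : Type*} [Fintype Ω] (p : Ω → ℝ) (hp1 : ∑ ω, p ω = 1) {E : Ω → Prop}
    (h : ∀ ω, E ω) : pr p E = 1 := by
  unfold pr
  simp [h, hp1]

lemma prefix_succ_iff {Ω 𝒳 : Type*} (X : Ω → ℕ → 𝒳) (i : ℕ) (ω' ω : Ω) :
    prefixSeq X (i+1) ω' = prefixSeq X (i+1) ω ↔
      (X ω' i = X ω i ∧ prefixSeq X i ω' = prefixSeq X i ω) := by
  constructor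
  · intro h
    exact ⟨congrFun h (Fin.last i), funext fun j => congrFun h (Fin.castSucc j)⟩
  · rintro ⟨h1, h2⟩
    funext j
    refine Fin.lastCases ?_ (fun j => ?_) j
    · exact h1
    · exact congrFun h2 j

lemma key_log_telescope (A C D : ℕ → ℝ) (hA : ∀ i, 0 < A i) (hC : ∀ i, 0 < C i)
    (hD : ∀ i, 0 < D i) (hA0 : A 0 = 1) (hC0 : C 0 = 1) (n : ℕ) :
    Real.log ((A n / C n) / ∏ i ∈ Finset.range n, (A (i+1) / D i)) =
      ∑ i ∈ Finset.range n, Real.log (D i * C i / (A i * C (i+1))) := by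
  have hprod : ∀ m ∈ Finset.range n, A (m+1) / D m ≠ 0 := fun m _ => by
    have := hA (m+1); have := hD m; positivity
  rw [Real.log_div (by have := hA n; have := hC n; positivity)
      (Finset.prod_ne_zero_iff.mpr hprod),
    Real.log_div (hA n).ne' (hC n).ne', Real.log_prod hprod]
  have hterm : ∀ i ∈ Finset.range n,
      Real.log (A (i+1) / D i) = Real.log (A (i+1)) - Real.log (D i) :=
    fun i _ => Real.log_div (hA _).ne' (hD _).ne'
  have hterm2 : ∀ i ∈ Finset.range n,
      Real.log (D i * C i / (A i * C (i+1))) =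
        Real.log (D i) + Real.log (C i) - (Real.log (A i) + Real.log (C (i+1))) := by
    intro i _
    rw [Real.log_div (by have := hD i; have := hC i; positivity)
        (by have := hA i; have := hC (i+1); positivity),
      Real.log_mul (hD _).ne' (hC _).ne', Real.log_mul (hA _).ne' (hC _).ne']
  rw [Finset.sum_congr rfl hterm, Finset.sum_congr rfl hterm2,
    Finset.sum_sub_distrib, Finset.sum_sub_distrib, Finset.sum_add_distrib,
    Finset.sum_add_distrib]
  have t1 : ∑ i ∈ Finset.range n, (Real.log (A (i+1)) - Real.log (A i)) =
      Real.log (A n) - Real.log (A 0) := Finset.sum_range_sub (fun i => Real.log (A i)) n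
  have t2 : ∑ i ∈ Finset.range n, (Real.log (C (i+1)) - Real.log (C i)) =
      Real.log (C n) - Real.log (C 0) := Finset.sum_range_sub (fun i => Real.log (C i)) n
  rw [Finset.sum_sub_distrib] at t1 t2
  rw [hA0] at t1; rw [hC0] at t2
  simp only [Real.log_one, sub_zero] at t1 t2
  linarith

/-- observational–interventional gap equals reverse directed
information: `E[log(P(Y^n|X^n)/P(Y^n‖X^n))] = I(Y^{n-1}→X^n)
= Σ_{i=1}^n I(Y^{i-1}; X_i | X^{i-1})`. -/
theorem obs_interventional_gap_eq_reverse_directedInfo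
    {Ω 𝒳 𝒴 : Type*} [Fintype Ω] [Fintype 𝒳] [Fintype 𝒴]
    (p : Ω → ℝ) (hp0 : ∀ ω, 0 ≤ p ω) (hp1 : ∑ ω, p ω = 1)
    (X : Ω → ℕ → 𝒳) (Y : Ω → ℕ → 𝒴) (n : ℕ) :
    ∑ ω, p ω * Real.log
        ((pr p (fun ω' => prefixSeq X n ω' = prefixSeq X n ω ∧
              prefixSeq Y n ω' = prefixSeq Y n ω) /
            pr p (fun ω' => prefixSeq X n ω' = prefixSeq X n ω)) /
          ∏ i ∈ Finset.range n,
            pr p (fun ω' => prefixSeq X (i + 1) ω' = prefixSeq X (i + 1) ω ∧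
                  prefixSeq Y (i + 1) ω' = prefixSeq Y (i + 1) ω) /
              pr p (fun ω' => prefixSeq X (i + 1) ω' = prefixSeq X (i + 1) ω ∧
                    prefixSeq Y i ω' = prefixSeq Y i ω)) =
      ∑ i ∈ Finset.range n,
        condMutualInfo p (prefixSeq Y i) (fun ω => X ω i) (prefixSeq X i) := by
  classical
  unfold condMutualInfo
  conv_rhs => rw [Finset.sum_comm]
  refine Finset.sum_congr rfl fun ω _ => ?_
  rw [← Finset.mul_sum]
  rcases (hp0 ω).eq_or_lt with h0 | hpos
  · rw [← h0]; ring
  congr 1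
  have triv : ∀ ω', prefixSeq X 0 ω' = prefixSeq X 0 ω ∧ prefixSeq Y 0 ω' = prefixSeq Y 0 ω :=
    fun ω' => ⟨funext fun j => j.elim0, funext fun j => j.elim0⟩
  have e1 : ∀ i, pr p (fun ω' => prefixSeq Y i ω' = prefixSeq Y i ω ∧
      X ω' i = X ω i ∧ prefixSeq X i ω' = prefixSeq X i ω) =
      pr p (fun ω' => prefixSeq X (i+1) ω' = prefixSeq X (i+1) ω ∧
        prefixSeq Y i ω' = prefixSeq Y i ω) := fun i =>
    pr_congr' p (fun ω' => by rw [prefix_succ_iff]; tauto)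
  have e2 : ∀ i, pr p (fun ω' => prefixSeq Y i ω' = prefixSeq Y i ω ∧
      prefixSeq X i ω' = prefixSeq X i ω) =
      pr p (fun ω' => prefixSeq X i ω' = prefixSeq X i ω ∧
        prefixSeq Y i ω' = prefixSeq Y i ω) := fun i =>
    pr_congr' p (fun ω' => and_comm)
  have e3 : ∀ i, pr p (fun ω' => X ω' i = X ω i ∧ prefixSeq X i ω' = prefixSeq X i ω) =
      pr p (fun ω' => prefixSeq X (i+1) ω' = prefixSeq X (i+1) ω) := fun i =>
    pr_congr' p (fun ω' => (prefix_succ_iff X i ω' ω).symm)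
  simp only [e1, e2, e3]
  exact key_log_telescope
    (fun i => pr p (fun ω' => prefixSeq X i ω' = prefixSeq X i ω ∧
      prefixSeq Y i ω' = prefixSeq Y i ω))
    (fun i => pr p (fun ω' => prefixSeq X i ω' = prefixSeq X i ω))
    (fun i => pr p (fun ω' => prefixSeq X (i+1) ω' = prefixSeq X (i+1) ω ∧
      prefixSeq Y i ω' = prefixSeq Y i ω))
    (fun i => pr_pos' p hp0 hpos ⟨rfl, rfl⟩)
    (fun i => pr_pos' p hp0 hpos rfl)
    (fun i => pr_pos' p hp0 hpos ⟨rfl, rfl⟩)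
    (pr_true' p hp1 triv)
    (pr_true' p hp1 (fun ω' => funext fun j => j.elim0))
    n
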